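/- arXiv:1912.01887 — 2 statements merged into one kernel-verified Lean document; each statement's English description precedes it below -/
import Mathlib

section
/- Let ω ∈ D = D̂ ∩ Ď be a radial weight. Then there exist constants 0 < a < b < ∞ and C ≥ 1 such that for all 0 ≤ t ≤ s < 1: C⁻¹ ((1−s)/(1−t))^b ≤ ω̂(s)/ω̂(t) ≤ C ((1−s)/(1−t))^a. In particular ω̂(t)/(1−t)^b → ∞ and ω̂(t)/(1−t)^a → 0 as t → 1⁻. -/
open MeasureTheory Filter Set Complex ENNReal

noncomputable section

/-- The open unit disk in `ℂ`. -/
def uD : Set ℂ := Metric.ball 0 1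

/-- The normalized Lebesgue area measure `dA` on `ℂ` (Lebesgue measure divided by `π`,
so that the unit disk has measure `1`). -/
def mA : Measure ℂ := ENNReal.ofReal (1 / Real.pi) • (volume : Measure ℂ)

/-- `ω̂(r) = ∫_r^1 ω(s) ds` for a radial weight profile `ω : ℝ → ℝ`. -/
def wHat (ω : ℝ → ℝ) (r : ℝ) : ℝ := ∫ s in r..(1:ℝ), ω s

/-- A radial weight, identified with its radial profile: positive on `[0,1)` and integrable. -/
def IsRadialWeight (ω : ℝ → ℝ) : Prop :=
  (∀ r ∈ Ico (0:ℝ) 1, 0 < ω r) ∧ IntervalIntegrable ω volume 0 1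

/-- `ω ∈ D̂`: doubling. -/
def IsDoubling (ω : ℝ → ℝ) : Prop :=
  ∃ C : ℝ, 0 < C ∧ ∀ r ∈ Ico (0:ℝ) 1, wHat ω r ≤ C * wHat ω ((1 + r) / 2)

/-- `ω ∈ Ď`: reverse doubling. -/
def IsRevDoubling (ω : ℝ → ℝ) : Prop :=
  ∃ K : ℝ, 1 < K ∧ ∃ C : ℝ, 1 < C ∧ ∀ r ∈ Ico (0:ℝ) 1,
    C * wHat ω (1 - (1 - r) / K) ≤ wHat ω r

/-- `ω ∈ D = D̂ ∩ Ď`. -/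
def IsDD (ω : ℝ → ℝ) : Prop := IsDoubling ω ∧ IsRevDoubling ω

/-- The moment `ω_n = ∫_0^1 r^n ω(r) dr`. -/
def wMom (ω : ℝ → ℝ) (n : ℕ) : ℝ := ∫ r in (0:ℝ)..1, r ^ n * ω r

/-- The Bergman reproducing kernel `B_z^ω(w) = (1/2) Σ_k (w z̄)^k / ω_{2k+1}`. -/
def wBk (ω : ℝ → ℝ) (z w : ℂ) : ℂ :=
  (1 / 2) * ∑' k : ℕ, (w * (starRingEnd ℂ) z) ^ k / (wMom ω (2 * k + 1) : ℂ)

/-- The diagonal value `B_z^ω(z) = Σ_k |z|^{2k} / (2 ω_{2k+1}) = ‖B_z^ω‖²`. -/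
def wBkDiag (ω : ℝ → ℝ) (z : ℂ) : ℝ :=
  ∑' k : ℕ, ‖z‖ ^ (2 * k) / (2 * wMom ω (2 * k + 1))

/-- Pseudo-hyperbolic distance `ρ(z,w)`. -/
def pRho (z w : ℂ) : ℝ := ‖(z - w) / (1 - (starRingEnd ℂ) z * w)‖

/-- The Bergman metric `β(z,w)`. -/
def bDist (z w : ℂ) : ℝ := (1 / 2) * Real.log ((1 + pRho z w) / (1 - pRho z w))

/-- The Bergman disk `D(z,r)`. -/
def bDisk (z : ℂ) (r : ℝ) : Set ℂ := {w ∈ uD | bDist z w < r}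

/-- The annulus `Λ_k = {z : 1 - 2⁻ᵏ ≤ |z| < 1 - 2⁻ᵏ⁻¹}`. -/
def annl (k : ℕ) : Set ℂ :=
  {z : ℂ | 1 - 1 / 2 ^ k ≤ ‖z‖ ∧ ‖z‖ < 1 - 1 / 2 ^ (k + 1)}

/-- The Möbius invariant measure `dλ(z) = dA(z)/(1-|z|²)²` on the unit disk. -/
def mLam : Measure ℂ :=
  (mA.restrict uD).withDensity fun z => ENNReal.ofReal (1 / (1 - ‖z‖ ^ 2) ^ 2)

/-- `L^p` norm with respect to `λ` restricted to a set, for `0 < p ≤ ∞`. -/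
def eLpLam (p : ℝ≥0∞) (f : ℂ → ℝ≥0∞) (s : Set ℂ) : ℝ≥0∞ :=
  if p = ∞ then essSup f (mLam.restrict s)
  else (∫⁻ z in s, f z ^ p.toReal ∂mLam) ^ (1 / p.toReal)

/-- `ℓ^q` norm of a sequence in `[0,∞]`, for `0 ≤ q ≤ ∞`, where `q = 0` means `limsup`. -/
def lqN (q : ℝ≥0∞) (a : ℕ → ℝ≥0∞) : ℝ≥0∞ :=
  if q = 0 then Filter.limsup a Filter.atTop
  else if q = ∞ then ⨆ k, a k
  else (∑' k, a k ^ q.toReal) ^ (1 / q.toReal)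

/-- `ℓ^p` norm of a sequence in `[0,∞]`, for `0 < p ≤ ∞`. -/
def lpN (p : ℝ≥0∞) (a : ℕ → ℝ≥0∞) : ℝ≥0∞ :=
  if p = ∞ then ⨆ j, a j else (∑' j, a j ^ p.toReal) ^ (1 / p.toReal)

/-- The Herz norm `‖f‖_{K_q^p(λ)}`. -/
def herzN (p q : ℝ≥0∞) (f : ℂ → ℝ≥0∞) : ℝ≥0∞ := lqN q fun k => eLpLam p f (annl k)

/-- `μ̂_r(z) = μ(D(z,r)) / ((1-|z|) ω̂(z))`. -/
def muHat (ω : ℝ → ℝ) (μ : Measure ℂ) (r : ℝ) (z : ℂ) : ℝ≥0∞ :=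
  μ (bDisk z r) / ENNReal.ofReal ((1 - ‖z‖) * wHat ω (‖z‖))

/-- The Berezin transform `T̃_μ(z) = (1/B_z^ω(z)) ∫_𝔻 |B_z^ω(w)|² dμ(w)`. -/
def berezin (ω : ℝ → ℝ) (μ : Measure ℂ) (z : ℂ) : ℝ≥0∞ :=
  (∫⁻ w, ENNReal.ofReal (‖wBk ω z w‖ ^ 2) ∂μ) / ENNReal.ofReal (wBkDiag ω z)

/-- `B_ω f(z) = (1/B_z^ω(z)) ∫_𝔻 f(w) |B_z^ω(w)|² ω̂(w)/(1-|w|) dA(w)` for `f ≥ 0`. -/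
def Bop (ω : ℝ → ℝ) (f : ℂ → ℝ≥0∞) (z : ℂ) : ℝ≥0∞ :=
  (∫⁻ w in uD, f w *
      ENNReal.ofReal (‖wBk ω z w‖ ^ 2 * wHat ω (‖w‖) / (1 - ‖w‖))
      ∂mA) / ENNReal.ofReal (wBkDiag ω z)

/-- The `A_ω²` norm of a function on the disk. -/
def a2Norm (ω : ℝ → ℝ) (f : ℂ → ℂ) : ℝ≥0∞ :=
  (∫⁻ z in uD, ENNReal.ofReal (‖f z‖ ^ 2 * ω (‖z‖)) ∂mA) ^ (1 / 2 : ℝ)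

/-- Membership in the Bergman space `A_ω²`: analytic on the disk with finite norm. -/
def MemA2 (ω : ℝ → ℝ) (f : ℂ → ℂ) : Prop :=
  AnalyticOnNhd ℂ f uD ∧ a2Norm ω f < ∞

/-- Operator norm on `A_ω²` of a (not necessarily linear) map `T`. -/
def opNormA2 (ω : ℝ → ℝ) (T : (ℂ → ℂ) → ℂ → ℂ) : ℝ≥0∞ :=
  ⨆ f ∈ {f : ℂ → ℂ | MemA2 ω f ∧ a2Norm ω f ≤ 1}, a2Norm ω (T f)

/-- `R` is linear on `A_ω²` (as functions on the disk). -/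
def LinOnA2 (ω : ℝ → ℝ) (R : (ℂ → ℂ) → ℂ → ℂ) : Prop :=
  ∀ f g : ℂ → ℂ, MemA2 ω f → MemA2 ω g → ∀ a b : ℂ, ∀ z ∈ uD,
    R (fun w => a * f w + b * g w) z = a * R f z + b * R g z

/-- `R` has rank at most `j` on `A_ω²`: its range (on the disk) lies in the span of
`j` functions. -/
def RankLE (ω : ℝ → ℝ) (R : (ℂ → ℂ) → ℂ → ℂ) (j : ℕ) : Prop :=
  ∃ g : Fin j → ℂ → ℂ, ∀ f : ℂ → ℂ, MemA2 ω f →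
    ∃ c : Fin j → ℂ, ∀ z ∈ uD, R f z = ∑ i : Fin j, c i * g i z

/-- The `j`-th approximation number `λ_j(T) = inf {‖T - R‖ : rank R ≤ j}`. -/
def appNum (ω : ℝ → ℝ) (T : (ℂ → ℂ) → ℂ → ℂ) (j : ℕ) : ℝ≥0∞ :=
  ⨅ R ∈ {R : (ℂ → ℂ) → ℂ → ℂ |
      LinOnA2 ω R ∧ RankLE ω R j ∧ ∀ f, MemA2 ω f → MemA2 ω (R f)},
    opNormA2 ω fun f z => T f z - R f z

/-- The Schatten `p`-norm `‖T‖_{S_p}`, `0 < p ≤ ∞` (`p = ∞` being the operator norm). -/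
def schattenN (ω : ℝ → ℝ) (p : ℝ≥0∞) (T : (ℂ → ℂ) → ℂ → ℂ) : ℝ≥0∞ :=
  if p = ∞ then opNormA2 ω T
  else (∑' j : ℕ, appNum ω T j ^ p.toReal) ^ (1 / p.toReal)

/-- The Toeplitz operator `T_μ f(z) = ∫ f(ξ) conj(B_z^ω(ξ)) dμ(ξ)`. -/
def toep (ω : ℝ → ℝ) (μ : Measure ℂ) (f : ℂ → ℂ) (z : ℂ) : ℂ :=
  ∫ ξ, f ξ * (starRingEnd ℂ) (wBk ω z ξ) ∂μ

/-- The Schatten–Herz norm `‖T_μ‖_{S_{p,q}} = ‖{‖T_{μχ_k}‖_{S_p}}_k‖_{ℓ^q}`. -/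
def sHerzNorm (ω : ℝ → ℝ) (p q : ℝ≥0∞) (μ : Measure ℂ) : ℝ≥0∞ :=
  lqN q fun k => schattenN ω p (toep ω (μ.restrict (annl k)))

/-- `T_μ ∈ S_{p,q}`: each `T_{μχ_k}` maps `A_ω²` into itself, lies in `S_p`, and the
`ℓ^q` norm of the Schatten norms is finite. -/
def MemSpq (ω : ℝ → ℝ) (p q : ℝ≥0∞) (μ : Measure ℂ) : Prop :=
  (∀ k : ℕ, ∀ f, MemA2 ω f → MemA2 ω (toep ω (μ.restrict (annl k)) f)) ∧
  (∀ k : ℕ, schattenN ω p (toep ω (μ.restrict (annl k))) < ∞) ∧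
  sHerzNorm ω p q μ < ∞

/-- The dyadic polar rectangle `R_{j,k}`. -/
def Rjk (j k : ℕ) : Set ℂ :=
  {z ∈ uD | (∃ θ : ℝ, 2 * Real.pi * k / 2 ^ j ≤ θ ∧ θ < 2 * Real.pi * (k + 1) / 2 ^ j ∧
      z / (‖z‖ : ℂ) = Complex.exp ((θ : ℂ) * Complex.I)) ∧
    1 - 1 / 2 ^ j ≤ ‖z‖ ∧ ‖z‖ < 1 - 1 / 2 ^ (j + 1)}

section Stmt10Aux
variable {ω : ℝ → ℝ}



lemma wHat_one : wHat ω 1 = 0 := by simp [wHat]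

lemma intInt (hω : IsRadialWeight ω) {t s : ℝ} (ht : 0 ≤ t) (hts : t ≤ s) (hs : s ≤ 1) :
    IntervalIntegrable ω volume t s := by
  refine hω.2.mono_set (uIcc_subset_uIcc ?_ ?_) <;>
    simp [uIcc_of_le (zero_le_one' ℝ)] <;> constructor <;> linarith

lemma wHat_anti (hω : IsRadialWeight ω) {t s : ℝ} (ht : 0 ≤ t) (hts : t ≤ s) (hs : s ≤ 1) :
    wHat ω s ≤ wHat ω t := by
  have h1 : IntervalIntegrable ω volume t s := intInt hω ht hts hs
  have h2 : IntervalIntegrable ω volume s 1 := intInt hω (ht.trans hts) hs le_rfl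
  have hadd : (∫ u in t..s, ω u) + (∫ u in s..1, ω u) = ∫ u in t..1, ω u :=
    intervalIntegral.integral_add_adjacent_intervals h1 h2
  have hnn : 0 ≤ ∫ u in t..s, ω u := by
    refine intervalIntegral.integral_nonneg_of_ae_restrict hts ?_
    have hmem : ∀ᵐ x ∂(volume.restrict (Icc t s)), x ∈ Icc t s :=
      ae_restrict_mem measurableSet_Icc
    have hne : ∀ᵐ x ∂(volume.restrict (Icc t s)), x ≠ (1:ℝ) := by
      refine ae_restrict_of_ae ?_
      rw [ae_iff]
      convert Real.volume_singleton (a := (1:ℝ)) using 2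
      ext x; simp
    filter_upwards [hmem, hne] with x hx hx1
    exact (hω.1 x ⟨ht.trans hx.1, lt_of_le_of_ne (hx.2.trans hs) hx1⟩).le
  show wHat ω s ≤ wHat ω t
  unfold wHat
  linarith [hadd]

lemma wHat_nonneg (hω : IsRadialWeight ω) {t : ℝ} (ht : 0 ≤ t) (ht1 : t ≤ 1) : 0 ≤ wHat ω t := by
  have := wHat_anti hω ht ht1 le_rfl
  rw [wHat_one] at this; exact this

lemma wHat_pos (hω : IsRadialWeight ω) {t : ℝ} (ht : 0 ≤ t) (ht1 : t < 1) : 0 < wHat ω t := by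
  refine intervalIntegral.intervalIntegral_pos_of_pos_on (intInt hω ht ht1.le le_rfl) ?_ ht1
  intro x hx
  exact hω.1 x ⟨ht.trans hx.1.le, hx.2⟩


lemma doubling_iter {C₁ : ℝ} (hC₁ : 0 ≤ C₁)
    (hd : ∀ r ∈ Ico (0:ℝ) 1, wHat ω r ≤ C₁ * wHat ω ((1 + r) / 2))
    {t : ℝ} (ht : 0 ≤ t) (ht1 : t < 1) (n : ℕ) :
    wHat ω t ≤ C₁ ^ n * wHat ω (1 - (1 - t) / 2 ^ n) := by
  induction n with
  | zero => simp
  | succ n ih =>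
    have h2n : (0:ℝ) < 2 ^ n := by positivity
    have hr0 : 0 ≤ 1 - (1 - t) / 2 ^ n := by
      have : (1 - t) / 2 ^ n ≤ 1 - t := by
        apply div_le_self (by linarith) (one_le_pow₀ (by norm_num))
      linarith
    have hr1 : 1 - (1 - t) / 2 ^ n < 1 := by
      have : 0 < (1 - t) / 2 ^ n := div_pos (by linarith) h2n
      linarith
    have key := hd _ ⟨hr0, hr1⟩
    have heq : (1 + (1 - (1 - t) / 2 ^ n)) / 2 = 1 - (1 - t) / 2 ^ (n + 1) := by
      field_simp; ring
    rw [heq] at key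
    calc wHat ω t ≤ C₁ ^ n * wHat ω (1 - (1 - t) / 2 ^ n) := ih
      _ ≤ C₁ ^ n * (C₁ * wHat ω (1 - (1 - t) / 2 ^ (n + 1))) := by
          exact mul_le_mul_of_nonneg_left key (by positivity)
      _ = C₁ ^ (n + 1) * wHat ω (1 - (1 - t) / 2 ^ (n + 1)) := by ring

lemma revdoubling_iter {C₂ K : ℝ} (hK : 1 < K)
    (hr : ∀ r ∈ Ico (0:ℝ) 1, C₂ * wHat ω (1 - (1 - r) / K) ≤ wHat ω r)
    {t : ℝ} (ht : 0 ≤ t) (ht1 : t < 1) (hC₂ : 0 ≤ C₂) (n : ℕ) :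
    C₂ ^ n * wHat ω (1 - (1 - t) / K ^ n) ≤ wHat ω t := by
  induction n with
  | zero => simp
  | succ n ih =>
    have hK0 : (0:ℝ) < K := by linarith
    have hKn : (0:ℝ) < K ^ n := by positivity
    have hr0 : 0 ≤ 1 - (1 - t) / K ^ n := by
      have : (1 - t) / K ^ n ≤ 1 - t := by
        apply div_le_self (by linarith) (one_le_pow₀ hK.le)
      linarith
    have hr1 : 1 - (1 - t) / K ^ n < 1 := by
      have : 0 < (1 - t) / K ^ n := div_pos (by linarith) hKn
      linarith
    have key := hr _ ⟨hr0, hr1⟩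
    have heq : 1 - (1 - (1 - (1 - t) / K ^ n)) / K = 1 - (1 - t) / K ^ (n + 1) := by
      rw [_root_.sub_sub_cancel, div_div, ← pow_succ]
    rw [heq] at key
    calc C₂ ^ (n + 1) * wHat ω (1 - (1 - t) / K ^ (n + 1))
        = C₂ ^ n * (C₂ * wHat ω (1 - (1 - t) / K ^ (n + 1))) := by ring
      _ ≤ C₂ ^ n * wHat ω (1 - (1 - t) / K ^ n) :=
          mul_le_mul_of_nonneg_left key (by positivity)
      _ ≤ wHat ω t := ih


lemma master (hω : IsRadialWeight ω) (hD : IsDD ω) :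
    ∃ a₀ b₀ C : ℝ, 0 < a₀ ∧ a₀ ≤ b₀ ∧ 1 ≤ C ∧
      ∀ a' b' : ℝ, 0 < a' → a' ≤ a₀ → b₀ ≤ b' →
      ∀ t s : ℝ, 0 ≤ t → t ≤ s → s < 1 →
        C⁻¹ * ((1 - s) / (1 - t)) ^ b' ≤ wHat ω s / wHat ω t ∧
        wHat ω s / wHat ω t ≤ C * ((1 - s) / (1 - t)) ^ a' := by
  obtain ⟨⟨C₁, hC₁, hd⟩, ⟨K, hK, C₂, hC₂, hrd⟩⟩ := hD
  have hK0 : (0:ℝ) < K := by linarith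
  have hC₂0 : (0:ℝ) < C₂ := by linarith
  set a₀ : ℝ := Real.logb K C₂ with ha₀def
  have ha₀ : 0 < a₀ := Real.logb_pos hK hC₂
  set b₀ : ℝ := max (Real.logb 2 (max C₁ 2)) a₀ with hb₀def
  have hab : a₀ ≤ b₀ := le_max_right _ _
  set E : ℝ := (2:ℝ) ^ b₀ with hEdef
  have hE1 : 1 ≤ E := Real.one_le_rpow one_le_two (ha₀.le.trans hab)
  have hE0 : 0 < E := lt_of_lt_of_le one_pos hE1
  have hEC₁ : C₁ ≤ E := by
    calc C₁ ≤ max C₁ 2 := le_max_left _ _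
      _ = (2:ℝ) ^ Real.logb 2 (max C₁ 2) :=
          (Real.rpow_logb two_pos (by norm_num) (lt_of_lt_of_le two_pos (le_max_right _ _))).symm
      _ ≤ E := Real.rpow_le_rpow_of_exponent_le one_le_two (le_max_left _ _)
  set C : ℝ := max E C₂ with hCdef
  have hC0 : 0 < C := lt_of_lt_of_le hE0 (le_max_left _ _)
  have hC1 : 1 ≤ C := hE1.trans (le_max_left _ _)
  -- doubling holds with constant E
  have hdE : ∀ r ∈ Ico (0:ℝ) 1, wHat ω r ≤ E * wHat ω ((1 + r) / 2) := by
    intro r hr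
    refine (hd r hr).trans (mul_le_mul_of_nonneg_right hEC₁ ?_)
    exact wHat_nonneg hω (by linarith [hr.1]) (by linarith [hr.2.le])
  refine ⟨a₀, b₀, C, ha₀, hab, hC1, ?_⟩
  intro a' b' ha' ha'le hb'le t s ht hts hs1
  have ht1 : t < 1 := lt_of_le_of_lt hts hs1
  have h1t : (0:ℝ) < 1 - t := by linarith
  have h1s : (0:ℝ) < 1 - s := by linarith
  have htpos := wHat_pos hω ht ht1
  have hspos := wHat_pos hω (ht.trans hts) hs1
  set x : ℝ := (1 - s) / (1 - t) with hxdef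
  set y : ℝ := (1 - t) / (1 - s) with hydef
  have hx0 : 0 < x := div_pos h1s h1t
  have hy0 : 0 < y := div_pos h1t h1s
  have hxy : x = y⁻¹ := by rw [hxdef, hydef, inv_div]
  have hx1 : x ≤ 1 := by rw [hxdef]; exact div_le_one_of_le₀ (by linarith) h1t.le
  have hy1 : 1 ≤ y := by rw [hydef]; exact (one_le_div h1s).mpr (by linarith)
  constructor
  · -- lower bound
    set n : ℕ := ⌈Real.logb 2 y⌉₊ with hndef
    have hlogy : 0 ≤ Real.logb 2 y := Real.logb_nonneg one_lt_two hy1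
    have hyn : y ≤ (2:ℝ) ^ (n:ℝ) := by
      calc y = (2:ℝ) ^ Real.logb 2 y := (Real.rpow_logb two_pos (by norm_num) hy0).symm
        _ ≤ (2:ℝ) ^ (n:ℝ) := Real.rpow_le_rpow_of_exponent_le one_le_two (Nat.le_ceil _)
    have hyn2 : (2:ℝ) ^ (n:ℝ) ≤ 2 * y := by
      have hn1 : (n:ℝ) ≤ Real.logb 2 y + 1 := by
        have := Nat.ceil_lt_add_one hlogy
        linarith
      calc (2:ℝ) ^ (n:ℝ) ≤ (2:ℝ) ^ (Real.logb 2 y + 1) :=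
            Real.rpow_le_rpow_of_exponent_le one_le_two hn1
        _ = (2:ℝ) ^ Real.logb 2 y * 2 := by
            rw [Real.rpow_add two_pos, Real.rpow_one]
        _ = 2 * y := by rw [Real.rpow_logb two_pos (by norm_num) hy0]; ring
    have h2n : (0:ℝ) < 2 ^ n := by positivity
    have h2nr : ((2:ℝ) ^ n : ℝ) = (2:ℝ) ^ (n:ℝ) := (Real.rpow_natCast 2 n).symm
    -- s ≤ 1 - (1-t)/2^n
    have hsle : s ≤ 1 - (1 - t) / 2 ^ n := by
      have h : (1 - t) / (1 - s) ≤ (2:ℝ) ^ n := by rw [h2nr]; exact hyn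
      have h2 : 1 - t ≤ (2:ℝ) ^ n * (1 - s) := (div_le_iff₀ h1s).mp h
      have h3 : (1 - t) / 2 ^ n ≤ 1 - s := by rw [div_le_iff₀ h2n]; linarith
      linarith
    have hiter := doubling_iter hE0.le hdE ht ht1 n
    have hr1' : 1 - (1 - t) / 2 ^ n ≤ 1 := by
      have : 0 < (1 - t) / 2 ^ n := div_pos h1t h2n
      linarith
    have hwts : wHat ω t ≤ E ^ n * wHat ω s :=
      hiter.trans (mul_le_mul_of_nonneg_left
        (wHat_anti hω (ht.trans hts) hsle hr1') (by positivity))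
    -- E^n * x^b' ≤ E ≤ C
    have hxle : x ≤ (2:ℝ) ^ ((1:ℝ) - n) := by
      rw [Real.rpow_sub two_pos, Real.rpow_one, hxy]
      rw [le_div_iff₀ (by positivity)]
      rw [inv_mul_le_iff₀ hy0, mul_comm]
      exact hyn2
    have hkey : E ^ n * x ^ b' ≤ C := by
      have hb₀0 : 0 ≤ b₀ := ha₀.le.trans hab
      have h1 : x ^ b' ≤ x ^ b₀ := Real.rpow_le_rpow_of_exponent_ge hx0 hx1 hb'le
      have h2 : x ^ b₀ ≤ ((2:ℝ) ^ ((1:ℝ) - n)) ^ b₀ :=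
        Real.rpow_le_rpow hx0.le hxle hb₀0
      have h3 : E ^ n * ((2:ℝ) ^ ((1:ℝ) - n)) ^ b₀ = E := by
        rw [hEdef, ← Real.rpow_natCast ((2:ℝ) ^ b₀) n, ← Real.rpow_mul two_pos.le,
          ← Real.rpow_mul two_pos.le, ← Real.rpow_add two_pos]
        ring_nf
      calc E ^ n * x ^ b' ≤ E ^ n * x ^ b₀ :=
            mul_le_mul_of_nonneg_left h1 (by positivity)
        _ ≤ E ^ n * ((2:ℝ) ^ ((1:ℝ) - n)) ^ b₀ :=
            mul_le_mul_of_nonneg_left h2 (by positivity)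
        _ = E := h3
        _ ≤ C := le_max_left _ _
    rw [le_div_iff₀ htpos]
    have hEn : (0:ℝ) < E ^ n := by positivity
    calc C⁻¹ * x ^ b' * wHat ω t ≤ C⁻¹ * x ^ b' * (E ^ n * wHat ω s) := by
          refine mul_le_mul_of_nonneg_left hwts ?_
          positivity
      _ = C⁻¹ * (E ^ n * x ^ b') * wHat ω s := by ring
      _ ≤ C⁻¹ * C * wHat ω s := by
          refine mul_le_mul_of_nonneg_right (mul_le_mul_of_nonneg_left hkey ?_) ?_
          · positivity
          · exact hspos.le
      _ = wHat ω s := by rw [inv_mul_cancel₀ hC0.ne']; ring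
  · -- upper bound
    set m : ℕ := ⌊Real.logb K y⌋₊ with hmdef
    have hlogy : 0 ≤ Real.logb K y := Real.logb_nonneg hK hy1
    have hKm : (K:ℝ) ^ (m:ℝ) ≤ y := by
      calc (K:ℝ) ^ (m:ℝ) ≤ (K:ℝ) ^ Real.logb K y :=
            Real.rpow_le_rpow_of_exponent_le hK.le (Nat.floor_le hlogy)
        _ = y := Real.rpow_logb hK0 hK.ne' hy0
    have hKm2 : y ≤ (K:ℝ) ^ ((m:ℝ) + 1) := by
      have : Real.logb K y < (m:ℝ) + 1 := Nat.lt_floor_add_one _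
      calc y = (K:ℝ) ^ Real.logb K y := (Real.rpow_logb hK0 hK.ne' hy0).symm
        _ ≤ (K:ℝ) ^ ((m:ℝ) + 1) := Real.rpow_le_rpow_of_exponent_le hK.le this.le
    have hKmp : (0:ℝ) < K ^ m := by positivity
    have hKmr : ((K:ℝ) ^ m : ℝ) = (K:ℝ) ^ (m:ℝ) := (Real.rpow_natCast K m).symm
    have hsge : 1 - (1 - t) / K ^ m ≤ s := by
      have : 1 - s ≤ (1 - t) / K ^ m := by
        rw [le_div_iff₀ hKmp]
        have : (1 - s) * ((K:ℝ) ^ (m:ℝ)) ≤ 1 - t := by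
          calc (1 - s) * ((K:ℝ) ^ (m:ℝ)) ≤ (1 - s) * y :=
                mul_le_mul_of_nonneg_left hKm h1s.le
            _ = 1 - t := by rw [hydef]; field_simp
        rw [hKmr]; exact this
      linarith
    have hiter := revdoubling_iter hK hrd ht ht1 hC₂0.le m
    have hr0 : 0 ≤ 1 - (1 - t) / K ^ m := by
      have h1 : (1 - t) / K ^ m ≤ 1 - t :=
        div_le_self h1t.le (one_le_pow₀ hK.le)
      linarith
    have hanti : wHat ω s ≤ wHat ω (1 - (1 - t) / K ^ m) :=
      wHat_anti hω hr0 hsge hs1.le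
    have h2 : C₂ ^ m * wHat ω s ≤ wHat ω t :=
      le_trans (mul_le_mul_of_nonneg_left hanti (by positivity)) hiter
    -- 1 ≤ C₂^m * (C * x^a')
    have hxK : (K:ℝ) ^ (-((m:ℝ) + 1)) ≤ x := by
      rw [hxy, Real.rpow_neg hK0.le]
      exact inv_anti₀ hy0 hKm2
    have hkey : 1 ≤ C₂ ^ m * (C * x ^ a') := by
      have hxa : ((K:ℝ) ^ (-((m:ℝ) + 1))) ^ a₀ ≤ x ^ a' := by
        calc ((K:ℝ) ^ (-((m:ℝ) + 1))) ^ a₀ ≤ x ^ a₀ :=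
              Real.rpow_le_rpow (by positivity) hxK ha₀.le
          _ ≤ x ^ a' := Real.rpow_le_rpow_of_exponent_ge hx0 hx1 ha'le
      have hKa : ((K:ℝ) ^ (-((m:ℝ) + 1))) ^ a₀ = C₂ ^ (-((m:ℝ) + 1)) := by
        rw [← Real.rpow_natCast K m] at *
        rw [← Real.rpow_mul hK0.le, mul_comm, Real.rpow_mul hK0.le,
          Real.rpow_logb hK0 hK.ne' hC₂0]
      have : C₂ ^ m * (C₂ * C₂ ^ (-((m:ℝ) + 1))) = 1 := by
        have h2 : C₂ ^ (m:ℝ) * (C₂ ^ (1:ℝ) * C₂ ^ (-((m:ℝ) + 1))) = 1 := by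
          rw [← Real.rpow_add hC₂0, ← Real.rpow_add hC₂0]
          norm_num
        rw [Real.rpow_one, Real.rpow_natCast] at h2
        exact h2
      calc (1:ℝ) = C₂ ^ m * (C₂ * C₂ ^ (-((m:ℝ) + 1))) := this.symm
        _ = C₂ ^ m * (C₂ * ((K:ℝ) ^ (-((m:ℝ) + 1))) ^ a₀) := by rw [hKa]
        _ ≤ C₂ ^ m * (C * x ^ a') := by
            refine mul_le_mul_of_nonneg_left ?_ (by positivity)
            exact mul_le_mul (le_max_right _ _) hxa (by positivity) hC0.le
    rw [div_le_iff₀ htpos]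
    have hC₂m : (0:ℝ) < C₂ ^ m := by positivity
    calc wHat ω s = (C₂ ^ m)⁻¹ * (C₂ ^ m * wHat ω s) := by
          rw [← mul_assoc, inv_mul_cancel₀ hC₂m.ne', one_mul]
      _ ≤ (C₂ ^ m)⁻¹ * wHat ω t := mul_le_mul_of_nonneg_left h2 (by positivity)
      _ ≤ C * x ^ a' * wHat ω t := by
          refine mul_le_mul_of_nonneg_right ?_ htpos.le
          rw [inv_le_iff_one_le_mul₀ hC₂m]
          linarith [hkey]

theorem statement10_aux {ω : ℝ → ℝ} (hω : IsRadialWeight ω) (hD : IsDD ω) :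
    ∃ a b C : ℝ, 0 < a ∧ a < b ∧ 1 ≤ C ∧
      (∀ t s : ℝ, 0 ≤ t → t ≤ s → s < 1 →
        C⁻¹ * ((1 - s) / (1 - t)) ^ b ≤ wHat ω s / wHat ω t ∧
        wHat ω s / wHat ω t ≤ C * ((1 - s) / (1 - t)) ^ a) ∧
      Tendsto (fun t : ℝ => wHat ω t / (1 - t) ^ b) (nhdsWithin 1 (Iio 1)) atTop ∧
      Tendsto (fun t : ℝ => wHat ω t / (1 - t) ^ a) (nhdsWithin 1 (Iio 1)) (nhds 0) := by
  obtain ⟨a₀, b₀, C, ha₀, hab, hC1, hmain⟩ := master hω hD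
  have hC0 : (0:ℝ) < C := lt_of_lt_of_le one_pos hC1
  have hw0 : 0 < wHat ω 0 := wHat_pos hω le_rfl one_pos
  refine ⟨a₀ / 2, b₀ + 1, C, by linarith, by linarith, hC1, ?_, ?_, ?_⟩
  · intro t s ht hts hs1
    exact hmain (a₀ / 2) (b₀ + 1) (by linarith) (by linarith) (by linarith) t s ht hts hs1
  · -- tendsto atTop
    have hlow : ∀ t : ℝ, 0 ≤ t → t < 1 →
        (C⁻¹ * wHat ω 0) * (1 - t)⁻¹ ≤ wHat ω t / (1 - t) ^ (b₀ + 1) := by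
      intro t ht ht1
      have h1t : (0:ℝ) < 1 - t := by linarith
      have h := (hmain a₀ b₀ ha₀ le_rfl le_rfl 0 t le_rfl ht ht1).1
      simp only [sub_zero, div_one] at h
      have hwt : C⁻¹ * (1 - t) ^ b₀ * wHat ω 0 ≤ wHat ω t := by
        rw [← le_div_iff₀ hw0] at *
        exact h
      have hpow : (0:ℝ) < (1 - t) ^ (b₀ + 1) := Real.rpow_pos_of_pos h1t _
      rw [le_div_iff₀ hpow]
      have heq : (1 - t) ^ (b₀ + 1) = (1 - t) ^ b₀ * (1 - t) := by
        rw [Real.rpow_add h1t, Real.rpow_one]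
      rw [heq]
      calc (C⁻¹ * wHat ω 0) * (1 - t)⁻¹ * ((1 - t) ^ b₀ * (1 - t))
          = C⁻¹ * (1 - t) ^ b₀ * wHat ω 0 * ((1 - t)⁻¹ * (1 - t)) := by ring
        _ = C⁻¹ * (1 - t) ^ b₀ * wHat ω 0 := by
            rw [inv_mul_cancel₀ h1t.ne', mul_one]
        _ ≤ wHat ω t := hwt
    have htend : Tendsto (fun t : ℝ => (C⁻¹ * wHat ω 0) * (1 - t)⁻¹)
        (nhdsWithin 1 (Iio 1)) atTop := by
      have h1 : Tendsto (fun t : ℝ => 1 - t) (nhdsWithin 1 (Iio 1)) (nhdsWithin 0 (Ioi 0)) := by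
        apply tendsto_nhdsWithin_of_tendsto_nhds_of_eventually_within
        · have : Tendsto (fun t : ℝ => 1 - t) (nhds 1) (nhds 0) := by
            have hcont : Continuous (fun t : ℝ => 1 - t) := by continuity
            have := hcont.tendsto (1:ℝ)
            simpa using this
          exact this.mono_left nhdsWithin_le_nhds
        · filter_upwards [self_mem_nhdsWithin] with t ht
          simp only [mem_Iio] at ht
          simp only [mem_Ioi]
          linarith
      have h2 : Tendsto (fun t : ℝ => (1 - t)⁻¹) (nhdsWithin 1 (Iio 1)) atTop :=
        tendsto_inv_nhdsGT_zero.comp h1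
      exact h2.const_mul_atTop (by positivity)
    refine tendsto_atTop_mono' _ ?_ htend
    have hIoo : Ioo (0:ℝ) 1 ∈ nhdsWithin (1:ℝ) (Iio 1) := by
      rw [show Ioo (0:ℝ) 1 = Ioi 0 ∩ Iio 1 from rfl]
      exact inter_mem (mem_nhdsWithin_of_mem_nhds (Ioi_mem_nhds one_pos)) self_mem_nhdsWithin
    filter_upwards [hIoo] with t ht
    exact hlow t ht.1.le ht.2
  · -- tendsto to 0
    have hup : ∀ t : ℝ, 0 ≤ t → t < 1 →
        wHat ω t / (1 - t) ^ (a₀ / 2) ≤ (C * wHat ω 0) * (1 - t) ^ (a₀ / 2) := by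
      intro t ht ht1
      have h1t : (0:ℝ) < 1 - t := by linarith
      have h := (hmain a₀ b₀ ha₀ le_rfl le_rfl 0 t le_rfl ht ht1).2
      simp only [sub_zero, div_one] at h
      have hwt : wHat ω t ≤ C * (1 - t) ^ a₀ * wHat ω 0 := by
        rw [div_le_iff₀ hw0] at h
        exact h
      have hpow : (0:ℝ) < (1 - t) ^ (a₀ / 2) := Real.rpow_pos_of_pos h1t _
      rw [div_le_iff₀ hpow]
      have heq : (1 - t) ^ a₀ = (1 - t) ^ (a₀ / 2) * (1 - t) ^ (a₀ / 2) := by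
        rw [← Real.rpow_add h1t]; ring_nf
      calc wHat ω t ≤ C * (1 - t) ^ a₀ * wHat ω 0 := hwt
        _ = (C * wHat ω 0) * (1 - t) ^ (a₀ / 2) * (1 - t) ^ (a₀ / 2) := by
            rw [heq]; ring
    have htend : Tendsto (fun t : ℝ => (C * wHat ω 0) * (1 - t) ^ (a₀ / 2))
        (nhdsWithin 1 (Iio 1)) (nhds 0) := by
      have h1 : Tendsto (fun t : ℝ => 1 - t) (nhdsWithin 1 (Iio 1)) (nhds 0) := by
        have : Tendsto (fun t : ℝ => 1 - t) (nhds 1) (nhds 0) := by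
          have hcont : Continuous (fun t : ℝ => 1 - t) := by continuity
          have := hcont.tendsto (1:ℝ)
          simpa using this
        exact this.mono_left nhdsWithin_le_nhds
      have h2 : Tendsto (fun u : ℝ => u ^ (a₀ / 2)) (nhds 0) (nhds 0) := by
        have hc : ContinuousAt (fun u : ℝ => u ^ (a₀ / 2)) 0 :=
          Real.continuousAt_rpow_const 0 (a₀ / 2) (Or.inr (by linarith))
        have := hc.tendsto
        rwa [Real.zero_rpow (by positivity : (0:ℝ) < a₀ / 2).ne'] at this
      have := (h2.comp h1).const_mul (C * wHat ω 0)
      simpa using this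
    refine squeeze_zero' ?_ ?_ htend
    · have hIoo : Ioo (0:ℝ) 1 ∈ nhdsWithin (1:ℝ) (Iio 1) := by
        rw [show Ioo (0:ℝ) 1 = Ioi 0 ∩ Iio 1 from rfl]
        exact inter_mem (mem_nhdsWithin_of_mem_nhds (Ioi_mem_nhds one_pos)) self_mem_nhdsWithin
      filter_upwards [hIoo] with t ht
      have h1t : (0:ℝ) < 1 - t := by linarith [ht.2]
      have := wHat_nonneg hω ht.1.le ht.2.le
      positivity
    · have hIoo : Ioo (0:ℝ) 1 ∈ nhdsWithin (1:ℝ) (Iio 1) := by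
        rw [show Ioo (0:ℝ) 1 = Ioi 0 ∩ Iio 1 from rfl]
        exact inter_mem (mem_nhdsWithin_of_mem_nhds (Ioi_mem_nhds one_pos)) self_mem_nhdsWithin
      filter_upwards [hIoo] with t ht
      exact hup t ht.1.le ht.2
end Stmt10Aux

/-- For `ω ∈ D` there are `0 < a < b` and `C ≥ 1` with
`C⁻¹((1-s)/(1-t))^b ≤ ω̂(s)/ω̂(t) ≤ C((1-s)/(1-t))^a` for `0 ≤ t ≤ s < 1`; in particular
`ω̂(t)/(1-t)^b → ∞` and `ω̂(t)/(1-t)^a → 0` as `t → 1⁻`. -/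
theorem statement10 (ω : ℝ → ℝ) (hω : IsRadialWeight ω) (hD : IsDD ω) :
    ∃ a b C : ℝ, 0 < a ∧ a < b ∧ 1 ≤ C ∧
      (∀ t s : ℝ, 0 ≤ t → t ≤ s → s < 1 →
        C⁻¹ * ((1 - s) / (1 - t)) ^ b ≤ wHat ω s / wHat ω t ∧
        wHat ω s / wHat ω t ≤ C * ((1 - s) / (1 - t)) ^ a) ∧
      Tendsto (fun t : ℝ => wHat ω t / (1 - t) ^ b) (nhdsWithin 1 (Iio 1)) atTop ∧
      Tendsto (fun t : ℝ => wHat ω t / (1 - t) ^ a) (nhdsWithin 1 (Iio 1)) (nhds 0) := by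
  exact statement10_aux hω hD

end
end

section
/- Let ω ∈ D = D̂ ∩ Ď be a radial weight. Then there exists ε₀ > 0 such that for every ε ∈ (0,ε₀) there is a constant C > 0 with ∫_0^{(1+s)/2} dt/((1−t)^{2+ε} ω̂(t)) ≤ C / ((1−s)^{1+ε} ω̂(s)) for all s ∈ [0,1). -/
open MeasureTheory Filter Set Complex ENNReal

noncomputable section

lemma wHat_pos_aux (ω : ℝ → ℝ) (hω : IsRadialWeight ω) {s : ℝ} (hs : s ∈ Ico (0:ℝ) 1) :
    0 < wHat ω s := by
  obtain ⟨hpos, hint⟩ := hω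
  have hsub : Set.uIcc s 1 ⊆ Set.uIcc (0:ℝ) 1 := by
    apply Set.uIcc_subset_uIcc
    · rw [Set.uIcc_of_le zero_le_one]; exact ⟨hs.1, hs.2.le⟩
    · rw [Set.uIcc_of_le zero_le_one]; exact ⟨zero_le_one, le_rfl⟩
  have hint' : IntervalIntegrable ω volume s 1 := hint.mono_set hsub
  exact intervalIntegral.intervalIntegral_pos_of_pos_on hint'
    (fun x hx => hpos x ⟨le_trans hs.1 hx.1.le, hx.2⟩) hs.2

lemma wHat_anti_aux (ω : ℝ → ℝ) (hω : IsRadialWeight ω) {a b : ℝ} (ha : 0 ≤ a) (hab : a ≤ b)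
    (hb : b < 1) : wHat ω b ≤ wHat ω a := by
  obtain ⟨hpos, hint⟩ := hω
  have hsub : ∀ c d : ℝ, 0 ≤ c → c ≤ d → d ≤ 1 → Set.uIcc c d ⊆ Set.uIcc (0:ℝ) 1 := by
    intro c d hc hcd hd
    apply Set.uIcc_subset_uIcc <;> rw [Set.uIcc_of_le zero_le_one]
    · exact ⟨hc, le_trans hcd hd⟩
    · exact ⟨le_trans hc hcd, hd⟩
  have h1 : IntervalIntegrable ω volume a b :=
    hint.mono_set (hsub a b ha hab hb.le)
  have h2 : IntervalIntegrable ω volume b 1 :=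
    hint.mono_set (hsub b 1 (le_trans ha hab) hb.le le_rfl)
  have hsplit : (∫ t in a..b, ω t) + (∫ t in b..(1:ℝ), ω t) = ∫ t in a..(1:ℝ), ω t :=
    intervalIntegral.integral_add_adjacent_intervals h1 h2
  have hnn : 0 ≤ ∫ t in a..b, ω t := by
    apply intervalIntegral.integral_nonneg hab
    intro u hu
    exact (hpos u ⟨le_trans ha hu.1, lt_of_le_of_lt hu.2 hb⟩).le
  unfold wHat
  linarith [hsplit]

lemma wHat_cont_aux (ω : ℝ → ℝ) (hω : IsRadialWeight ω) :
    ContinuousOn (wHat ω) (Icc (0:ℝ) 1) := by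
  have hint : IntegrableOn ω (Set.uIcc (0:ℝ) 1) volume := by
    rw [Set.uIcc_of_le zero_le_one, integrableOn_Icc_iff_integrableOn_Ioc]
    exact hω.2.1
  have := intervalIntegral.continuousOn_primitive_interval_left (b := (1:ℝ)) (a := (0:ℝ)) (μ := volume)
    (f := ω) hint
  rw [Set.uIcc_of_le zero_le_one] at this
  exact this

/-- For `ω ∈ D` there is `ε₀ > 0` such that for every `ε ∈ (0,ε₀)` one has
`∫_0^{(1+s)/2} dt/((1-t)^{2+ε} ω̂(t)) ≲ 1/((1-s)^{1+ε} ω̂(s))` uniformly in `s ∈ [0,1)`. -/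
theorem statement11 (ω : ℝ → ℝ) (hω : IsRadialWeight ω) (hD : IsDD ω) :
    ∃ ε₀ : ℝ, 0 < ε₀ ∧ ∀ ε ∈ Ioo (0:ℝ) ε₀, ∃ C : ℝ, 0 < C ∧ ∀ s ∈ Ico (0:ℝ) 1,
      (∫ t in (0:ℝ)..((1 + s) / 2), 1 / ((1 - t) ^ (2 + ε) * wHat ω t)) ≤
        C / ((1 - s) ^ (1 + ε) * wHat ω s) := by
  obtain ⟨C, hC, hdoub⟩ := hD.1
  refine ⟨1, one_pos, ?_⟩
  rintro ε ⟨hε0, hε1⟩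
  refine ⟨4 * C, by positivity, ?_⟩
  rintro s ⟨hs0, hs1⟩
  set m : ℝ := (1 + s) / 2 with hm
  have hsm : s ≤ m := by rw [hm]; linarith
  have hm1 : m < 1 := by rw [hm]; linarith
  have hm0 : (0:ℝ) ≤ m := by rw [hm]; linarith
  have h1m : 1 - m = (1 - s) / 2 := by rw [hm]; ring
  have h1mpos : 0 < 1 - m := by linarith
  have hws : 0 < wHat ω s := wHat_pos_aux ω hω ⟨hs0, hs1⟩
  have hwm : 0 < wHat ω m := wHat_pos_aux ω hω ⟨hm0, hm1⟩
  have hdm : wHat ω s ≤ C * wHat ω m := hdoub s ⟨hs0, hs1⟩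
  -- continuity of wHat on the relevant interval
  have hcont : ContinuousOn (wHat ω) (Icc (0:ℝ) 1) := wHat_cont_aux ω hω
  have hcontm : ContinuousOn (wHat ω) (Icc (0:ℝ) m) :=
    hcont.mono (Set.Icc_subset_Icc le_rfl hm1.le)
  -- pointwise bound
  have hpt : ∀ t ∈ Icc (0:ℝ) m,
      1 / ((1 - t) ^ (2 + ε) * wHat ω t) ≤ (C / wHat ω s) * (1 - t) ^ (-(2 + ε)) := by
    intro t ht
    have h1t : 0 < 1 - t := by linarith [ht.2]
    have hwt : wHat ω m ≤ wHat ω t := wHat_anti_aux ω hω ht.1 ht.2 hm1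
    have hwtpos : 0 < wHat ω t := lt_of_lt_of_le hwm hwt
    have hrp : 0 < (1 - t) ^ (2 + ε) := Real.rpow_pos_of_pos h1t _
    rw [Real.rpow_neg h1t.le]
    rw [one_div, mul_inv]
    rw [div_mul_eq_mul_div, mul_comm C, mul_div_assoc]
    apply mul_le_mul_of_nonneg_left _ (inv_nonneg.2 hrp.le)
    have hkey : wHat ω s / C ≤ wHat ω t := by
      rw [div_le_iff₀ hC]
      nlinarith [hwt, hdm, hwm]
    rw [inv_le_iff_one_le_mul₀ hwtpos]
    calc (1:ℝ) = C / wHat ω s * (wHat ω s / C) := by field_simp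
      _ ≤ C / wHat ω s * wHat ω t := mul_le_mul_of_nonneg_left hkey (by positivity)
  -- integrability
  have hcf : ContinuousOn (fun t => 1 / ((1 - t) ^ (2 + ε) * wHat ω t)) (Icc (0:ℝ) m) := by
    apply ContinuousOn.div continuousOn_const
    · apply ContinuousOn.mul
      · exact (continuousOn_const.sub continuousOn_id).rpow_const
          (fun t ht => Or.inr (by positivity))
      · exact hcontm
    · intro t ht
      have h1t : 0 < 1 - t := by linarith [ht.2]
      have hwt : wHat ω m ≤ wHat ω t := wHat_anti_aux ω hω ht.1 ht.2 hm1
      have h2 := Real.rpow_pos_of_pos h1t (2 + ε)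
      have hwtpos : 0 < wHat ω t := lt_of_lt_of_le hwm hwt
      positivity
  have hcg : ContinuousOn (fun t => (C / wHat ω s) * (1 - t) ^ (-(2 + ε))) (Icc (0:ℝ) m) := by
    apply ContinuousOn.mul continuousOn_const
    exact (continuousOn_const.sub continuousOn_id).rpow_const
      (fun t ht => Or.inl (by
        simp only [Pi.sub_apply, id_eq]
        intro h
        nlinarith [ht.2, hm1]))
  have hIf : IntervalIntegrable (fun t => 1 / ((1 - t) ^ (2 + ε) * wHat ω t)) volume 0 m := by
    apply ContinuousOn.intervalIntegrable
    rwa [Set.uIcc_of_le hm0]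
  have hIg : IntervalIntegrable (fun t => (C / wHat ω s) * (1 - t) ^ (-(2 + ε))) volume 0 m := by
    apply ContinuousOn.intervalIntegrable
    rwa [Set.uIcc_of_le hm0]
  have hmono : (∫ t in (0:ℝ)..m, 1 / ((1 - t) ^ (2 + ε) * wHat ω t)) ≤
      ∫ t in (0:ℝ)..m, (C / wHat ω s) * (1 - t) ^ (-(2 + ε)) :=
    intervalIntegral.integral_mono_on hm0 hIf hIg hpt
  -- compute the majorant integral
  have hcomp : (∫ t in (0:ℝ)..m, (1 - t) ^ (-(2 + ε))) = ∫ x in (1 - m)..(1:ℝ), x ^ (-(2 + ε)) := by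
    have := intervalIntegral.integral_comp_sub_left (a := (0:ℝ)) (b := m)
      (fun x => x ^ (-(2 + ε))) 1
    simpa using this
  have hval : (∫ x in (1 - m)..(1:ℝ), x ^ (-(2 + ε))) =
      ((1 - m) ^ (-(1 + ε)) - 1) / (1 + ε) := by
    rw [integral_rpow]
    · have h2 : -(2 + ε) + 1 = -(1 + ε) := by ring
      have hne : (1:ℝ) + ε ≠ 0 := by positivity
      rw [h2, Real.one_rpow, div_neg]
      ring
    · right
      constructor
      · intro h; nlinarith
      · rw [Set.uIcc_of_le (by linarith : 1 - m ≤ (1:ℝ))]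
        rintro ⟨h, -⟩
        linarith
  have hA : (0:ℝ) < (1 - m) ^ (-(1 + ε)) := Real.rpow_pos_of_pos h1mpos _
  have hAle : (1 - m) ^ (-(1 + ε)) ≤ 4 / (1 - s) ^ (1 + ε) := by
    have h1s : (0:ℝ) < 1 - s := by linarith
    have heq : (1 - m) ^ (-(1 + ε)) = 2 ^ (1 + ε) / (1 - s) ^ (1 + ε) := by
      rw [h1m, Real.rpow_neg (by positivity), Real.div_rpow h1s.le (by norm_num)]
      rw [inv_div]
    rw [heq]
    gcongr
    calc (2:ℝ) ^ (1 + ε) ≤ 2 ^ (2:ℝ) :=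
          Real.rpow_le_rpow_of_exponent_le one_le_two (by linarith)
      _ = 4 := by rw [show (2:ℝ) = ((2:ℕ):ℝ) by norm_num, Real.rpow_natCast]; norm_num
  have h1s : (0:ℝ) < 1 - s := by linarith
  have hrs : (0:ℝ) < (1 - s) ^ (1 + ε) := Real.rpow_pos_of_pos h1s _
  calc (∫ t in (0:ℝ)..m, 1 / ((1 - t) ^ (2 + ε) * wHat ω t))
      ≤ ∫ t in (0:ℝ)..m, (C / wHat ω s) * (1 - t) ^ (-(2 + ε)) := hmono
    _ = (C / wHat ω s) * (((1 - m) ^ (-(1 + ε)) - 1) / (1 + ε)) := by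
        rw [intervalIntegral.integral_const_mul, hcomp, hval]
    _ ≤ (C / wHat ω s) * (1 - m) ^ (-(1 + ε)) := by
        apply mul_le_mul_of_nonneg_left _ (by positivity)
        rw [div_le_iff₀ (by linarith : (0:ℝ) < 1 + ε)]
        nlinarith [hA]
    _ ≤ (C / wHat ω s) * (4 / (1 - s) ^ (1 + ε)) := by
        apply mul_le_mul_of_nonneg_left hAle (by positivity)
    _ = 4 * C / ((1 - s) ^ (1 + ε) * wHat ω s) := by
        field_simp

end
end
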